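/- Let H > 0, t > 0, 1 ≤ p ≤ 2, and suppose T is a linear operator satisfying ‖Tφ‖_{L^{2k}} ≤ H t^{−(N/4)(1/p − 1/(2k))} ‖φ‖_{L^p} for every integer k ≥ 1. Then for every φ ∈ L^p(R^N), ‖Tφ‖_{exp L^2} ≤ H t^{−N/(4p)} (log(t^{−N/4}+1))^{−1/2} ‖φ‖_{L^p}. -/

import Mathlib

open MeasureTheory ENNReal

/-- Luxembourg norm of exp L² expressed through the series
    Σ_{k≥1} ‖u‖_{L^{2k}}^{2k}/(k! α^{2k}). -/
noncomputable def expL2NormS {N : ℕ} (u : EuclideanSpace ℝ (Fin N) → ℝ) : ℝ :=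
  sInf {α : ℝ | 0 < α ∧
    (∑' k : ℕ, (eLpNorm u ((2 * (k + 1) : ℕ) : ℝ≥0∞) volume).toReal ^ (2 * (k + 1)) /
      ((Nat.factorial (k + 1)) * α ^ (2 * (k + 1)))) ≤ 1}

set_option maxHeartbeats 1600000 in
/-- Smoothing L^p → exp L² estimate: if ‖Tφ‖_{L^{2k}} ≤ H t^{−(N/4)(1/p−1/(2k))}‖φ‖_{L^p}
    for all k ≥ 1, then ‖Tφ‖_{exp L²} ≤ H t^{−N/(4p)} (log(t^{−N/4}+1))^{−1/2} ‖φ‖_{L^p}. -/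
theorem smoothing_expL2_bound {N : ℕ}
    (T : (EuclideanSpace ℝ (Fin N) → ℝ) → (EuclideanSpace ℝ (Fin N) → ℝ))
    (hT : IsLinearMap ℝ T) (H t p : ℝ) (hH : 0 < H) (ht : 0 < t)
    (hp1 : 1 ≤ p) (hp2 : p ≤ 2)
    (hbound : ∀ k : ℕ, 1 ≤ k → ∀ φ : EuclideanSpace ℝ (Fin N) → ℝ,
      MemLp φ (ENNReal.ofReal p) volume →
      eLpNorm (T φ) ((2 * k : ℕ) : ℝ≥0∞) volume ≤
        ENNReal.ofReal (H * t ^ (-(N : ℝ) / 4 * (1 / p - 1 / (2 * (k : ℝ))))) *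
          eLpNorm φ (ENNReal.ofReal p) volume)
    (φ : EuclideanSpace ℝ (Fin N) → ℝ) (hφ : MemLp φ (ENNReal.ofReal p) volume) :
    expL2NormS (T φ) ≤
      H * t ^ (-(N : ℝ) / (4 * p)) * (Real.log (t ^ (-(N : ℝ) / 4) + 1)) ^ (-(1 / 2 : ℝ)) *
        (eLpNorm φ (ENNReal.ofReal p) volume).toReal := by
  have hp0 : 0 < p := lt_of_lt_of_le one_pos hp1
  set L : ℝ := Real.log (t ^ (-(N : ℝ) / 4) + 1) with hLdef
  have htN : 0 < t ^ (-(N : ℝ) / 4) := Real.rpow_pos_of_pos ht _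
  have hL : 0 < L := Real.log_pos (by linarith)
  set c : ℝ := (eLpNorm φ (ENNReal.ofReal p) volume).toReal with hcdef
  have hc0 : 0 ≤ c := ENNReal.toReal_nonneg
  have hφfin : eLpNorm φ (ENNReal.ofReal p) volume ≠ ⊤ := hφ.2.ne
  rw [expL2NormS]
  have hbdd : BddBelow {α : ℝ | 0 < α ∧
      (∑' k : ℕ, (eLpNorm (T φ) ((2 * (k + 1) : ℕ) : ℝ≥0∞) volume).toReal ^ (2 * (k + 1)) /
        ((Nat.factorial (k + 1)) * α ^ (2 * (k + 1)))) ≤ 1} :=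
    ⟨0, fun x hx => le_of_lt hx.1⟩
  rcases eq_or_lt_of_le hc0 with hc | hc
  · -- degenerate case : ‖φ‖_p = 0
    have hφ0 : eLpNorm φ (ENNReal.ofReal p) volume = 0 := by
      rcases (ENNReal.toReal_eq_zero_iff _).mp hc.symm with h | h
      · exact h
      · exact absurd h hφfin
    have hT0 : ∀ k : ℕ, eLpNorm (T φ) ((2 * (k + 1) : ℕ) : ℝ≥0∞) volume = 0 := by
      intro k
      refine le_antisymm ?_ (zero_le)
      simpa [hφ0] using hbound (k + 1) (by omega) φ hφ
    have hmem : ∀ α : ℝ, 0 < α → α ∈ {α : ℝ | 0 < α ∧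
        (∑' k : ℕ, (eLpNorm (T φ) ((2 * (k + 1) : ℕ) : ℝ≥0∞) volume).toReal ^ (2 * (k + 1)) /
          ((Nat.factorial (k + 1)) * α ^ (2 * (k + 1)))) ≤ 1} := by
      intro α hα
      refine ⟨hα, ?_⟩
      have h0 : (∑' k : ℕ, (eLpNorm (T φ) ((2 * (k + 1) : ℕ) : ℝ≥0∞) volume).toReal ^ (2 * (k + 1)) /
          ((Nat.factorial (k + 1)) * α ^ (2 * (k + 1)))) = 0 := by
        calc (∑' k : ℕ, (eLpNorm (T φ) ((2 * (k + 1) : ℕ) : ℝ≥0∞) volume).toReal ^ (2 * (k + 1)) /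
              ((Nat.factorial (k + 1)) * α ^ (2 * (k + 1))))
            = ∑' _ : ℕ, (0:ℝ) := tsum_congr (fun k => by rw [hT0 k]; simp)
          _ = 0 := tsum_zero
      rw [h0]; norm_num
    have hle : ∀ ε : ℝ, 0 < ε → sInf {α : ℝ | 0 < α ∧
        (∑' k : ℕ, (eLpNorm (T φ) ((2 * (k + 1) : ℕ) : ℝ≥0∞) volume).toReal ^ (2 * (k + 1)) /
          ((Nat.factorial (k + 1)) * α ^ (2 * (k + 1)))) ≤ 1} ≤ ε :=
      fun ε hε => csInf_le hbdd (hmem ε hε)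
    have : (H * t ^ (-(N : ℝ) / (4 * p)) * L ^ (-(1 / 2 : ℝ)) * c) = 0 := by
      rw [← hc, mul_zero]
    rw [this]
    exact le_of_forall_pos_le_add (by intro ε hε; simpa using hle ε hε)
  · -- main case
    set M : ℝ := H * t ^ (-(N : ℝ) / (4 * p)) * L ^ (-(1 / 2 : ℝ)) * c with hMdef
    have hM : 0 < M := by positivity
    apply csInf_le hbdd
    refine ⟨hM, ?_⟩
    -- bound each term
    have key : ∀ k : ℕ,
        (eLpNorm (T φ) ((2 * (k + 1) : ℕ) : ℝ≥0∞) volume).toReal ^ (2 * (k + 1)) /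
          ((Nat.factorial (k + 1)) * M ^ (2 * (k + 1))) ≤
        t ^ ((N : ℝ) / 4) * (L ^ (k + 1) / (Nat.factorial (k + 1))) := by
      intro k
      set n : ℕ := k + 1 with hn
      set e : ℝ := -(N : ℝ) / 4 * (1 / p - 1 / (2 * (n : ℝ))) with hedef
      have hb := hbound n (by omega) φ hφ
      have hBpos : 0 < H * t ^ e := by positivity
      have ha : (eLpNorm (T φ) ((2 * n : ℕ) : ℝ≥0∞) volume).toReal ≤ H * t ^ e * c := by
        have h1 := ENNReal.toReal_mono
          (ENNReal.mul_ne_top ENNReal.ofReal_ne_top hφfin) hb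
        rwa [ENNReal.toReal_mul, ENNReal.toReal_ofReal hBpos.le] at h1
      have hnum : (eLpNorm (T φ) ((2 * n : ℕ) : ℝ≥0∞) volume).toReal ^ (2 * n) ≤
          (H * t ^ e * c) ^ (2 * n) :=
        pow_le_pow_left₀ ENNReal.toReal_nonneg ha _
      have hden : (0:ℝ) < (Nat.factorial n) * M ^ (2 * n) := by positivity
      have heq : (H * t ^ e * c) ^ (2 * n) / ((Nat.factorial n) * M ^ (2 * n)) =
          t ^ ((N : ℝ) / 4) * (L ^ n / (Nat.factorial n)) := by
        have hpow : ∀ (x : ℝ), 0 < x → ∀ (a : ℝ) (m : ℕ), (x ^ a) ^ m = x ^ (a * m) := by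
          intro x hx a m
          rw [← Real.rpow_natCast (x ^ a) m, ← Real.rpow_mul hx.le]
        have hts : t ^ (e * (2 * n : ℕ)) =
            t ^ ((N : ℝ) / 4) * t ^ ((-(N : ℝ) / (4 * p)) * (2 * n : ℕ)) := by
          rw [← Real.rpow_add ht]
          congr 1
          have hn0 : ((n:ℝ)) ≠ 0 := by positivity
          rw [hedef]
          push_cast
          field_simp
          ring
        have hLs : (L ^ (-(1 / 2 : ℝ))) ^ (2 * n) = (L ^ n)⁻¹ := by
          rw [hpow L hL]
          have : (-(1/2 : ℝ)) * (2 * n : ℕ) = -(n : ℝ) := by push_cast; ring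
          rw [this, Real.rpow_neg hL.le, Real.rpow_natCast]
        rw [hMdef]
        simp only [mul_pow]
        rw [hpow t ht, hpow t ht, hLs, hts]
        have h1 : (0:ℝ) < t ^ ((-(N : ℝ) / (4 * p)) * (2 * n : ℕ)) := Real.rpow_pos_of_pos ht _
        have h2 : (0:ℝ) < t ^ ((N : ℝ) / 4) := Real.rpow_pos_of_pos ht _
        have h3 : (0:ℝ) < (Nat.factorial n : ℝ) := by positivity
        have h4 : (0:ℝ) < L ^ n := by positivity
        field_simp
      calc (eLpNorm (T φ) ((2 * n : ℕ) : ℝ≥0∞) volume).toReal ^ (2 * n) /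
            ((Nat.factorial n) * M ^ (2 * n)) ≤
          (H * t ^ e * c) ^ (2 * n) / ((Nat.factorial n) * M ^ (2 * n)) := by
            gcongr
        _ = t ^ ((N : ℝ) / 4) * (L ^ n / (Nat.factorial n)) := heq
    -- summability of the dominating series
    have hsumf : Summable (fun n : ℕ => L ^ n / (Nat.factorial n : ℝ)) :=
      Real.summable_pow_div_factorial L
    have hsumf' : Summable (fun k : ℕ => L ^ (k + 1) / (Nat.factorial (k + 1) : ℝ)) :=
      (summable_nat_add_iff 1).mpr hsumf
    have hsumg : Summable (fun k : ℕ =>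
        t ^ ((N : ℝ) / 4) * (L ^ (k + 1) / (Nat.factorial (k + 1) : ℝ))) :=
      hsumf'.mul_left _
    have hnonneg : ∀ k : ℕ, 0 ≤
        (eLpNorm (T φ) ((2 * (k + 1) : ℕ) : ℝ≥0∞) volume).toReal ^ (2 * (k + 1)) /
          ((Nat.factorial (k + 1)) * M ^ (2 * (k + 1))) := by
      intro k; positivity
    have hsumLHS : Summable (fun k : ℕ =>
        (eLpNorm (T φ) ((2 * (k + 1) : ℕ) : ℝ≥0∞) volume).toReal ^ (2 * (k + 1)) /
          ((Nat.factorial (k + 1)) * M ^ (2 * (k + 1)))) :=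
      Summable.of_nonneg_of_le hnonneg key hsumg
    have hsum_le := Summable.tsum_le_tsum key hsumLHS hsumg
    refine le_trans hsum_le ?_
    -- compute the dominating sum
    have hexp : Real.exp L = ∑' n : ℕ, L ^ n / (Nat.factorial n : ℝ) := by
      rw [Real.exp_eq_exp_ℝ, NormedSpace.exp_eq_tsum_div]
    have htail : (∑' k : ℕ, L ^ (k + 1) / (Nat.factorial (k + 1) : ℝ)) = Real.exp L - 1 := by
      have h0 := Summable.tsum_eq_zero_add hsumf
      rw [← hexp] at h0
      simp only [pow_zero, Nat.factorial_zero, Nat.cast_one, div_one] at h0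
      linarith
    have hpos : (0:ℝ) < t ^ (-(N : ℝ) / 4) + 1 := by linarith
    rw [tsum_mul_left, htail, hLdef, Real.exp_log hpos]
    have heq1 : t ^ ((N : ℝ) / 4) * (t ^ (-(N : ℝ) / 4) + 1 - 1) = 1 := by
      rw [add_sub_cancel_right, ← Real.rpow_add ht,
        show (N:ℝ)/4 + -(N:ℝ)/4 = 0 by ring, Real.rpow_zero]
    rw [heq1]
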